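/- A congruent embedding by a Markov mapping p ↦ pQ is an isometry for the Fisher metric: if Q is an m×n row-stochastic partition matrix (each column having exactly one positive entry), p ∈ Δ_{m-1}°, and u, v ∈ R^m with sum_i u_i = 0 = sum_i v_i, then sum_{j=1}^n (uQ)_j (vQ)_j / (pQ)_j = sum_{i=1}^m u_i v_i / p_i. -/

import Mathlib

/-- A congruent embedding by a Markov mapping `p ↦ pQ` is an isometry for
the Fisher metric on the open probability simplex: if `Q` is an `m × n` row-stochastic
partition matrix (each column `j` has its unique nonzero entry, which is positive, in
row `part j`, and the blocks of each row sum to `1`), `p ∈ Δ_{m-1}°`, and `u, v` are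
tangent vectors (coordinates summing to zero), then
`∑_j (uQ)_j (vQ)_j / (pQ)_j = ∑_i u_i v_i / p_i`. -/
theorem markov_map_fisher_isometry_simplex {m n : ℕ}
    (Q : Matrix (Fin m) (Fin n) ℝ) (part : Fin n → Fin m)
    (hsupp : ∀ i j, Q i j ≠ 0 → part j = i)
    (hpos : ∀ j, 0 < Q (part j) j)
    (hsum : ∀ i : Fin m,
      ∑ j ∈ Finset.univ.filter (fun j => part j = i), Q i j = 1)
    (p : Fin m → ℝ) (hp : ∀ i, 0 < p i) (hp1 : ∑ i, p i = 1)
    (u v : Fin m → ℝ) (hu : ∑ i, u i = 0) (hv : ∑ i, v i = 0) :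
    ∑ j, (∑ i, u i * Q i j) * (∑ i, v i * Q i j) / (∑ i, p i * Q i j)
      = ∑ i, u i * v i / p i := by
  have hcol : ∀ (f : Fin m → ℝ) (j : Fin n),
      ∑ i, f i * Q i j = f (part j) * Q (part j) j := by
    intro f j
    refine Finset.sum_eq_single (part j) (fun i _ hne => ?_) (by simp)
    by_cases h : Q i j = 0
    · simp [h]
    · exact absurd (hsupp i j h) (by exact fun e => hne e.symm)
  have hterm : ∀ j : Fin n,
      (∑ i, u i * Q i j) * (∑ i, v i * Q i j) / (∑ i, p i * Q i j)
        = (u (part j) * v (part j) / p (part j)) * Q (part j) j := by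
    intro j
    rw [hcol u j, hcol v j, hcol p j]
    have hQ := (hpos j).ne'
    have hpj := (hp (part j)).ne'
    field_simp
  calc ∑ j, (∑ i, u i * Q i j) * (∑ i, v i * Q i j) / (∑ i, p i * Q i j)
      = ∑ j, (u (part j) * v (part j) / p (part j)) * Q (part j) j := by
        exact Finset.sum_congr rfl fun j _ => hterm j
    _ = ∑ i : Fin m, ∑ j ∈ Finset.univ.filter (fun j => part j = i),
          (u (part j) * v (part j) / p (part j)) * Q (part j) j := by
        exact (Finset.sum_fiberwise _ _ _).symm
    _ = ∑ i, u i * v i / p i := by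
        refine Finset.sum_congr rfl fun i _ => ?_
        rw [Finset.sum_congr rfl (fun j hj => ?_), ← Finset.mul_sum, hsum i, mul_one]
        rw [(Finset.mem_filter.mp hj).2]
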